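/- Let M, N be complex 2×2 traceless matrices with M² = N² = I, written as M = X·σ and N = Y·σ in the Pauli basis with X = x̃ + iξ, Y = y + iη ∈ \mathbb{C}³. Suppose η ≠ 0 and M(N - N†) = 2I + N + N†. Then x̃ = (y × η)/|η|² and ξ = -η/|η|². -/

import Mathlib

open Matrix
noncomputable section

/-- The Pauli matrices `σ₁, σ₂, σ₃`. -/
def pauli : Fin 3 → Matrix (Fin 2) (Fin 2) ℂ :=
  ![!![0, 1; 1, 0], !![0, -Complex.I; Complex.I, 0], !![1, 0; 0, -1]]

/-- `X·σ = X₁σ₁ + X₂σ₂ + X₃σ₃` for a complex vector `X`. -/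
def dotPauli (X : Fin 3 → ℂ) : Matrix (Fin 2) (Fin 2) ℂ := ∑ i, X i • pauli i

set_option maxHeartbeats 1000000 in
/-- if `M = X·σ`, `N = Y·σ` with `X = x̃ + iξ`, `Y = y + iη`,
`M² = N² = 1`, `η ≠ 0` and `M(N - N†) = 2I + N + N†`, then
`x̃ = (y × η)/|η|²` and `ξ = -η/|η|²`. -/
theorem stmt11 (xt ξ y η : Fin 3 → ℝ)
    (M N : Matrix (Fin 2) (Fin 2) ℂ)
    (hM : M = dotPauli (fun i => (xt i : ℂ) + Complex.I * (ξ i : ℂ)))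
    (hN : N = dotPauli (fun i => (y i : ℂ) + Complex.I * (η i : ℂ)))
    (hM2 : M ^ 2 = 1) (hN2 : N ^ 2 = 1) (hη : η ≠ 0)
    (key : M * (N - Nᴴ) = (2 : ℂ) • (1 : Matrix (Fin 2) (Fin 2) ℂ) + N + Nᴴ) :
    xt = (η ⬝ᵥ η)⁻¹ • (crossProduct y η) ∧ ξ = -(η ⬝ᵥ η)⁻¹ • η := by
  subst hM hN
  have h00 := congrFun (congrFun key 0) 0
  have h01 := congrFun (congrFun key 0) 1
  have h10 := congrFun (congrFun key 1) 0
  have h11 := congrFun (congrFun key 1) 1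
  simp [dotPauli, pauli, Matrix.mul_apply, Fin.sum_univ_three, Fin.sum_univ_two,
    Matrix.conjTranspose_apply, Matrix.one_apply] at h00 h01 h10 h11
  rw [Complex.ext_iff] at h00 h01 h10 h11
  simp only [Complex.add_re, Complex.add_im, Complex.mul_re, Complex.mul_im, Complex.I_re,
    Complex.I_im, Complex.ofReal_re, Complex.ofReal_im, Complex.neg_re, Complex.neg_im,
    Complex.sub_re, Complex.sub_im] at h00 h01 h10 h11
  norm_num at h00 h01 h10 h11
  obtain ⟨r00, i00⟩ := h00
  obtain ⟨r01, i01⟩ := h01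
  obtain ⟨r10, i10⟩ := h10
  obtain ⟨r11, i11⟩ := h11
  have hd : ξ 0 * η 0 + ξ 1 * η 1 + ξ 2 * η 2 = -1 := by linarith
  have hx : xt 0 * η 0 + xt 1 * η 1 + xt 2 * η 2 = 0 := by linarith
  have c0 : ξ 1 * η 2 - ξ 2 * η 1 = 0 := by linarith
  have c1 : ξ 2 * η 0 - ξ 0 * η 2 = 0 := by linarith
  have c2 : ξ 0 * η 1 - ξ 1 * η 0 = 0 := by linarith
  have a0 : xt 1 * η 2 - xt 2 * η 1 = -(y 0) := by linarith
  have a1 : xt 2 * η 0 - xt 0 * η 2 = -(y 1) := by linarith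
  have a2 : xt 0 * η 1 - xt 1 * η 0 = -(y 2) := by linarith
  have hdd : η ⬝ᵥ η ≠ 0 := by
    simp only [dotProduct, Fin.sum_univ_three]
    intro h
    apply hη
    have h0 : η 0 = 0 := mul_self_eq_zero.mp (le_antisymm
      (by linarith [h, mul_self_nonneg (η 1), mul_self_nonneg (η 2)]) (mul_self_nonneg _))
    have h1 : η 1 = 0 := mul_self_eq_zero.mp (le_antisymm
      (by linarith [h, mul_self_nonneg (η 0), mul_self_nonneg (η 2)]) (mul_self_nonneg _))
    have h2 : η 2 = 0 := mul_self_eq_zero.mp (le_antisymm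
      (by linarith [h, mul_self_nonneg (η 0), mul_self_nonneg (η 1)]) (mul_self_nonneg _))
    funext k
    fin_cases k
    · exact h0
    · exact h1
    · exact h2
  constructor <;> funext i <;> fin_cases i <;>
    simp only [crossProduct, dotProduct, Fin.sum_univ_three, Pi.smul_apply, Pi.neg_apply,
      smul_eq_mul, neg_mul, Matrix.cons_val_zero, Matrix.cons_val_one, Matrix.head_cons,
      LinearMap.mk₂_apply, Matrix.cons_val_fin_one, Fin.isValue, Fin.reduceFinMk,
      Fin.zero_eta, Fin.mk_one, Matrix.cons_val_two, Matrix.tail_cons] at hdd ⊢ <;>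
    simp only [inv_mul_eq_div, ← neg_div] <;> rw [eq_div_iff hdd]
  · linear_combination η 0 * hx - η 2 * a1 + η 1 * a2
  · linear_combination η 1 * hx - η 0 * a2 + η 2 * a0
  · linear_combination η 2 * hx - η 1 * a0 + η 0 * a1
  · linear_combination η 0 * hd - η 2 * c1 + η 1 * c2
  · linear_combination η 1 * hd + η 2 * c0 - η 0 * c2
  · linear_combination η 2 * hd - η 1 * c0 + η 0 * c1
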